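/- Let n in-sample examples each carry a binary label, with |A| of them (excluding a fixed example i) having label y. Let k be odd, let v_n, v_c, v_w be real values, and define v(S) = v_n if |S| < k; otherwise v(S) is determined by a majority vote. Then the contribution to the Shapley value of example i from being the k-th element of a permutation equals (1/n) C(n−1, k−1)⁻¹ [ Σ_{a=0}^{(k−1)/2 − I(y_i = y)} C(|A|, a) C(n−1−|A|, k−1−a) v_w + Σ_{a=(k−1)/2 − I(y_i=y)+1}^{k−1} C(|A|, a) C(n−1−|A|, k−1−a) v_c ] − v_n/n. Formally: the expectation over uniformly random permutations σ of the n examples, restricted to the event that i is in position k, of (v(S_i(σ) ∪ {i}) − v_n) · P(i in position k), equals the stated expression. -/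

import Mathlib

lemma aux_count_subsets {α : Type*} [DecidableEq α] (E : Finset α) (P : α → Prop)
    [DecidablePred P] (r a : ℕ) (ha : a ≤ r) :
    ((E.powersetCard r).filter (fun U => (U.filter P).card = a)).card
      = (E.filter P).card.choose a * (E.filter (fun x => ¬ P x)).card.choose (r - a) := by
  rw [← Finset.card_powersetCard, ← Finset.card_powersetCard, ← Finset.card_product]
  apply Finset.card_nbij' (fun U => (U.filter P, U.filter (fun x => ¬ P x)))
    (fun p => p.1 ∪ p.2)
  · intro U hU
    simp only [Finset.mem_coe, Finset.mem_filter, Finset.mem_powersetCard] at hU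
    simp only [Finset.mem_coe, Finset.mem_product, Finset.mem_powersetCard]
    have hsub := hU.1.1
    have hcard : U.card = r := hU.1.2
    have hfa : (U.filter P).card = a := hU.2
    refine ⟨⟨Finset.filter_subset_filter _ hsub, hfa⟩,
      Finset.filter_subset_filter _ hsub, ?_⟩
    have := Finset.card_filter_add_card_filter_not (s := U) (p := P)
    omega
  · intro p hp
    simp only [Finset.mem_coe, Finset.mem_product, Finset.mem_powersetCard] at hp
    obtain ⟨⟨h1s, h1c⟩, h2s, h2c⟩ := hp
    have hP1 : ∀ x ∈ p.1, P x := fun x hx => (Finset.mem_filter.mp (h1s hx)).2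
    have hP2 : ∀ x ∈ p.2, ¬ P x := fun x hx => (Finset.mem_filter.mp (h2s hx)).2
    have hdisj : Disjoint p.1 p.2 := by
      rw [Finset.disjoint_left]; intro x h1 h2; exact hP2 x h2 (hP1 x h1)
    simp only [Finset.mem_coe, Finset.mem_filter, Finset.mem_powersetCard]
    refine ⟨⟨?_, ?_⟩, ?_⟩
    · intro x hx
      rcases Finset.mem_union.mp hx with h | h
      · exact (Finset.mem_filter.mp (h1s h)).1
      · exact (Finset.mem_filter.mp (h2s h)).1
    · rw [Finset.card_union_of_disjoint hdisj]; omega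
    · have : (p.1 ∪ p.2).filter P = p.1 := by
        ext x
        simp only [Finset.mem_filter, Finset.mem_union]
        constructor
        · rintro ⟨h | h, hPx⟩
          · exact h
          · exact absurd hPx (hP2 x h)
        · intro h; exact ⟨Or.inl h, hP1 x h⟩
      rw [this, h1c]
  · intro U _
    exact Finset.filter_union_filter_not_eq (p := P) U
  · intro p hp
    simp only [Finset.mem_coe, Finset.mem_product, Finset.mem_powersetCard] at hp
    obtain ⟨⟨h1s, h1c⟩, h2s, h2c⟩ := hp
    have hP1 : ∀ x ∈ p.1, P x := fun x hx => (Finset.mem_filter.mp (h1s hx)).2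
    have hP2 : ∀ x ∈ p.2, ¬ P x := fun x hx => (Finset.mem_filter.mp (h2s hx)).2
    have e1 : (p.1 ∪ p.2).filter P = p.1 := by
      ext x
      simp only [Finset.mem_filter, Finset.mem_union]
      constructor
      · rintro ⟨h | h, hPx⟩
        · exact h
        · exact absurd hPx (hP2 x h)
      · intro h; exact ⟨Or.inl h, hP1 x h⟩
    have e2 : (p.1 ∪ p.2).filter (fun x => ¬ P x) = p.2 := by
      ext x
      simp only [Finset.mem_filter, Finset.mem_union]
      constructor
      · rintro ⟨h | h, hPx⟩
        · exact absurd (hP1 x h) hPx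
        · exact h
      · intro h; exact ⟨Or.inr h, hP2 x h⟩
    have : ((p.1 ∪ p.2).filter P, (p.1 ∪ p.2).filter (fun x => ¬ P x)) = (p.1, p.2) := by
      rw [e1, e2]
    simpa using this

lemma aux_count_perms {α : Type*} [Fintype α] [DecidableEq α] (i : α) (k : ℕ) (hk1 : 1 ≤ k) (hkn : k ≤ Fintype.card α)
    (U : Finset α) (hiU : i ∉ U) (hU : U.card = k - 1) :
    (Finset.univ.filter (fun π : α ≃ Fin (Fintype.card α) =>
        (π i : ℕ) = k - 1 ∧ ∀ x, ((π x : ℕ) < k - 1 ↔ x ∈ U))).card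
      = (k - 1).factorial * (Fintype.card α - k).factorial := by
  classical
  set n := Fintype.card α with hn
  have hkn' : k - 1 < n := by omega
  -- the two "small" equivs computing cards of pieces
  have cardA1 : Fintype.card {x // x ∈ U} = k - 1 := by
    simp [hU]
  have cardB1 : Fintype.card {j : Fin n // (j : ℕ) < k - 1} = k - 1 := by
    let e : {j : Fin n // (j : ℕ) < k - 1} ≃ Fin (k - 1) :=
      { toFun := fun j => ⟨j.1, j.2⟩
        invFun := fun j => ⟨⟨j.1, lt_trans j.2 hkn'⟩, j.2⟩
        left_inv := fun j => rfl
        right_inv := fun j => rfl }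
    rw [Fintype.card_congr e, Fintype.card_fin]
  have cardA2 : Fintype.card {x // x ∉ U ∧ x ≠ i} = n - k := by
    rw [Fintype.card_subtype]
    have : Finset.univ.filter (fun x => x ∉ U ∧ x ≠ i) = Finset.univ \ (insert i U) := by
      ext x
      simp only [Finset.mem_filter, Finset.mem_univ, true_and, Finset.mem_sdiff,
        Finset.mem_insert]
      tauto
    rw [this, Finset.card_sdiff_of_subset (Finset.subset_univ _), Finset.card_insert_of_notMem hiU,
      Finset.card_univ, hU]
    omega
  have cardB2 : Fintype.card {j : Fin n // ¬ ((j : ℕ) < k - 1) ∧ (j : ℕ) ≠ k - 1} = n - k := by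
    let e : {j : Fin n // ¬ ((j : ℕ) < k - 1) ∧ (j : ℕ) ≠ k - 1} ≃ Fin (n - k) :=
      { toFun := fun j => ⟨j.1 - k, by have := j.1.2; have := j.2; omega⟩
        invFun := fun m => ⟨⟨m.1 + k, by have := m.2; omega⟩, by
          constructor <;> simp <;> omega⟩
        left_inv := fun j => by
          ext
          have := j.2
          simp
          omega
        right_inv := fun m => by ext; simp }
    rw [Fintype.card_congr e, Fintype.card_fin]
  rw [← Fintype.card_subtype]
  set T := (({x // x ∈ U} ≃ {j : Fin n // (j : ℕ) < k - 1}) ×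
      ({x // x ∉ U ∧ x ≠ i} ≃ {j : Fin n // ¬ ((j : ℕ) < k - 1) ∧ (j : ℕ) ≠ k - 1})) with hT
  let F : T → α → Fin n := fun fg x =>
    if hx : x ∈ U then (fg.1 ⟨x, hx⟩).1
    else if hxi : x = i then ⟨k - 1, hkn'⟩ else (fg.2 ⟨x, hx, hxi⟩).1
  have hv1 : ∀ (fg : T) (x : α) (hx : x ∈ U), F fg x = (fg.1 ⟨x, hx⟩).1 := by
    intro fg x hx; simp only [F, dif_pos hx]
  have hv2 : ∀ (fg : T), F fg i = ⟨k - 1, hkn'⟩ := by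
    intro fg; simp only [F, dif_neg hiU]; exact dif_pos trivial
  have hv3 : ∀ (fg : T) (x : α) (hx : x ∉ U) (hxi : x ≠ i),
      F fg x = (fg.2 ⟨x, hx, hxi⟩).1 := by
    intro fg x hx hxi; simp only [F, dif_neg hx, dif_neg hxi]
  have hlt : ∀ (fg : T) (x : α), ((F fg x : ℕ) < k - 1 ↔ x ∈ U) := by
    intro fg x
    by_cases hx : x ∈ U
    · rw [hv1 fg x hx]; exact iff_of_true (fg.1 ⟨x, hx⟩).2 hx
    · by_cases hxi : x = i
      · subst hxi; rw [hv2 fg]; simp [hx]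
      · rw [hv3 fg x hx hxi]
        exact iff_of_false (fg.2 ⟨x, hx, hxi⟩).2.1 hx
  have hne : ∀ (fg : T) (x : α), ((F fg x : ℕ) = k - 1 ↔ x = i) := by
    intro fg x
    by_cases hx : x ∈ U
    · rw [hv1 fg x hx]
      exact iff_of_false (by have := (fg.1 ⟨x, hx⟩).2; omega)
        (by rintro rfl; exact hiU hx)
    · by_cases hxi : x = i
      · subst hxi; rw [hv2 fg]; simp
      · rw [hv3 fg x hx hxi]
        exact iff_of_false (fg.2 ⟨x, hx, hxi⟩).2.2 hxi
  have hFinj : ∀ fg : T, Function.Injective (F fg) := by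
    intro fg x y h
    by_cases hx : x ∈ U
    · have hy : y ∈ U := by
        rw [← hlt fg y, ← h, hlt fg x]; exact hx
      have := hv1 fg x hx ▸ hv1 fg y hy ▸ h
      have := fg.1.injective (Subtype.ext this)
      exact Subtype.ext_iff.mp this
    · by_cases hxi : x = i
      · subst hxi
        have : (F fg y : ℕ) = k - 1 := by rw [← h, hv2 fg]
        exact ((hne fg y).mp this).symm
      · have hy : y ∉ U := by
          rw [← hlt fg y, ← h, hlt fg x]; exact hx
        have hyi : y ≠ i := by
          intro hyi; subst hyi
          have : (F fg x : ℕ) = k - 1 := by rw [h, hv2 fg]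
          exact hxi ((hne fg x).mp this)
        have := hv3 fg x hx hxi ▸ hv3 fg y hy hyi ▸ h
        have := fg.2.injective (Subtype.ext this)
        exact Subtype.ext_iff.mp this
  have hFbij : ∀ fg : T, Function.Bijective (F fg) :=
    fun fg => (Fintype.bijective_iff_injective_and_card _).mpr ⟨hFinj fg, by simp [hn]⟩
  have key : {π : α ≃ Fin n // (π i : ℕ) = k - 1 ∧ ∀ x, ((π x : ℕ) < k - 1 ↔ x ∈ U)} ≃ T := by
    refine
      { toFun := fun π =>
          (Equiv.subtypeEquiv π.1 (fun x => (π.2.2 x).symm),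
           Equiv.subtypeEquiv π.1 (fun x => ?_)),
        invFun := fun fg =>
          ⟨Equiv.ofBijective (F fg) (hFbij fg), by
            constructor
            · show (F fg i : ℕ) = k - 1
              rw [hv2 fg]
            · exact hlt fg⟩,
        left_inv := ?_, right_inv := ?_ }
    · -- the prop iff for the second subtypeEquiv
      have h1 := π.2.2 x
      have h2 : ((π.1 x : ℕ) = k - 1) ↔ x = i := by
        constructor
        · intro hc
          exact π.1.injective (Fin.val_injective (hc.trans π.2.1.symm))
        · rintro rfl; exact π.2.1
      constructor
      · rintro ⟨ha, hb⟩
        exact ⟨fun hc => ha (h1.mp hc), fun hc => hb (h2.mp hc)⟩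
      · rintro ⟨ha, hb⟩
        exact ⟨fun hc => ha (h1.mpr hc), fun hc => hb (h2.mpr hc)⟩
    · -- left_inv
      intro π
      apply Subtype.ext
      apply Equiv.ext
      intro x
      show F _ x = π.1 x
      by_cases hx : x ∈ U
      · rw [hv1 _ x hx]; rfl
      · by_cases hxi : x = i
        · subst hxi
          rw [hv2]
          exact Fin.ext π.2.1.symm
        · rw [hv3 _ x hx hxi]; rfl
    · -- right_inv
      intro fg
      refine Prod.ext (Equiv.ext fun x => Subtype.ext ?_) (Equiv.ext fun x => Subtype.ext ?_)
      · show F fg x.1 = (fg.1 x).1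
        exact hv1 fg x.1 x.2
      · show F fg x.1 = (fg.2 x).1
        exact hv3 fg x.1 x.2.1 x.2.2
  rw [Fintype.card_congr key]
  have hTcard : Fintype.card T =
      Fintype.card ({x // x ∈ U} ≃ {j : Fin n // (j : ℕ) < k - 1}) *
      Fintype.card ({x // x ∉ U ∧ x ≠ i} ≃ {j : Fin n // ¬ ((j : ℕ) < k - 1) ∧ (j : ℕ) ≠ k - 1}) :=
    Fintype.card_prod _ _
  rw [hTcard, Fintype.card_equiv (Fintype.equivOfCardEq (cardA1.trans cardB1.symm)),
    Fintype.card_equiv (Fintype.equivOfCardEq (cardA2.trans cardB2.symm)), cardA1, cardA2]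

/-- Lemma 5: the contribution to the Shapley value of example `i` from being the `k`-th
element of a permutation (creating a `k`-nn classification).  The left side is the
expectation, over uniformly random permutations, of the marginal value restricted to the
event that `i` is in position `k`; `A = {x ≠ i | lab x = y}`. -/
theorem stmt9 {α : Type*} [Fintype α] [DecidableEq α] (i : α) (lab : α → Bool) (y : Bool)
    (k : ℕ) (hk : Odd k) (hkn : k ≤ Fintype.card α) (vn vc vw : ℝ) :
    (∑ π : α ≃ Fin (Fintype.card α),
        if (π i : ℕ) = k - 1 then
          ((if k < 2 * (((Finset.univ.filter (fun x => π x < π i)).filter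
                (fun x => lab x = y)).card + (if lab i = y then 1 else 0))
            then vc else vw) - vn)
        else 0) / (Fintype.card α).factorial =
    (1 / (Fintype.card α : ℝ)) * ((Fintype.card α - 1).choose (k - 1) : ℝ)⁻¹ *
      (∑ a ∈ Finset.range k,
        (if a + (if lab i = y then 1 else 0) ≤ (k - 1) / 2 then vw else vc) *
          ((Finset.univ.filter (fun x => x ≠ i ∧ lab x = y)).card.choose a : ℝ) *
          ((Fintype.card α - 1 -
              (Finset.univ.filter (fun x => x ≠ i ∧ lab x = y)).card).choose (k - 1 - a) : ℝ)) -
    vn / (Fintype.card α : ℝ) := by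
  classical
  obtain ⟨t, ht⟩ := hk
  have hk1 : 1 ≤ k := by omega
  set n := Fintype.card α with hn
  set b : ℕ := if lab i = y then 1 else 0 with hb
  set m := (Finset.univ.filter (fun x => x ≠ i ∧ lab x = y)).card with hm
  set E := Finset.univ.erase i with hE
  have hEcard : E.card = n - 1 := by
    rw [hE, Finset.card_erase_of_mem (Finset.mem_univ i), Finset.card_univ]
  have hmE : Finset.univ.filter (fun x => x ≠ i ∧ lab x = y)
      = E.filter (fun x => lab x = y) := by
    ext x
    simp only [Finset.mem_filter, Finset.mem_univ, true_and, hE, Finset.mem_erase, and_comm]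
  have hmle : m ≤ n - 1 := by
    rw [hm, hmE]
    exact le_trans (Finset.card_filter_le _ _) hEcard.le
  have hmneg : (E.filter (fun x => ¬ lab x = y)).card = n - 1 - m := by
    have h2 := Finset.card_filter_add_card_filter_not
      (s := E) (p := fun x => lab x = y)
    rw [hm, hmE] at *
    omega
  -- Step 1: numerator equals fibered sum over U
  have hnum : (∑ π : α ≃ Fin n,
        if (π i : ℕ) = k - 1 then
          ((if k < 2 * (((Finset.univ.filter (fun x => π x < π i)).filter
                (fun x => lab x = y)).card + b)
            then vc else vw) - vn)
        else 0)
      = ∑ U ∈ E.powersetCard (k - 1),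
          ((k - 1).factorial * (n - k).factorial) •
            ((if k < 2 * ((U.filter (fun x => lab x = y)).card + b) then vc else vw) - vn) := by
    rw [← Finset.sum_filter]
    have hmaps : ∀ π ∈ Finset.univ.filter (fun π : α ≃ Fin n => (π i : ℕ) = k - 1),
        Finset.univ.filter (fun x => π x < π i) ∈ E.powersetCard (k - 1) := by
      intro π hπ
      rw [Finset.mem_filter] at hπ
      rw [Finset.mem_powersetCard]
      constructor
      · intro x hx
        rw [Finset.mem_filter] at hx
        rw [hE, Finset.mem_erase]
        exact ⟨fun hxi => absurd (hxi ▸ hx.2) (lt_irrefl _), Finset.mem_univ x⟩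
      · have : (Finset.univ.filter (fun x => π x < π i)).card = (Finset.Iio (π i)).card := by
          apply Finset.card_nbij (fun x => π x)
          · intro x hx
            rw [Finset.mem_coe, Finset.mem_filter] at hx
            exact Finset.mem_Iio.mpr hx.2
          · intro x _ y _ hxy
            exact π.injective hxy
          · intro j hj
            refine ⟨π.symm j, ?_, by simp⟩
            simp only [Finset.coe_filter, Finset.mem_univ, true_and, Set.mem_setOf_eq,
              Equiv.apply_symm_apply]
            exact Finset.mem_Iio.mp hj
        rw [this, Fin.card_Iio, hπ.2]
    rw [← Finset.sum_fiberwise_of_maps_to hmaps]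
    refine Finset.sum_congr rfl (fun U hU => ?_)
    rw [Finset.mem_powersetCard, hE] at hU
    have hiU : i ∉ U := fun hi => (Finset.mem_erase.mp (hU.1 hi)).1 rfl
    have hUe : U ⊆ Finset.univ.erase i := hU.1
    have hconst : ∀ π ∈ (Finset.univ.filter (fun π : α ≃ Fin n => (π i : ℕ) = k - 1)).filter
        (fun π => Finset.univ.filter (fun x => π x < π i) = U),
        ((if k < 2 * (((Finset.univ.filter (fun x => π x < π i)).filter
                (fun x => lab x = y)).card + b) then vc else vw) - vn)
          = ((if k < 2 * ((U.filter (fun x => lab x = y)).card + b) then vc else vw) - vn) := by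
      intro π hπ
      rw [Finset.mem_filter] at hπ
      rw [hπ.2]
    rw [Finset.sum_congr rfl hconst, Finset.sum_const]
    congr 1
    rw [Finset.filter_filter]
    have heq : Finset.univ.filter (fun π : α ≃ Fin n =>
          (π i : ℕ) = k - 1 ∧ Finset.univ.filter (fun x => π x < π i) = U)
        = Finset.univ.filter (fun π : α ≃ Fin n =>
          (π i : ℕ) = k - 1 ∧ ∀ x, ((π x : ℕ) < k - 1 ↔ x ∈ U)) := by
      apply Finset.filter_congr
      intro π _
      constructor
      · rintro ⟨h1, h2⟩
        refine ⟨h1, fun x => ?_⟩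
        rw [← h2, Finset.mem_filter]
        simp only [Finset.mem_univ, true_and]
        rw [Fin.lt_def, h1]
      · rintro ⟨h1, h2⟩
        refine ⟨h1, ?_⟩
        ext x
        simp only [Finset.mem_filter, Finset.mem_univ, true_and]
        rw [Fin.lt_def, h1]
        exact h2 x
    rw [heq, aux_count_perms i k hk1 hkn U hiU hU.2]
  rw [hnum]
  -- Step 2: fiber over a = |U ∩ A|
  have hmaps2 : ∀ U ∈ E.powersetCard (k - 1),
      (U.filter (fun x => lab x = y)).card ∈ Finset.range k := by
    intro U hU
    rw [Finset.mem_powersetCard] at hU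
    rw [Finset.mem_range]
    have := Finset.card_filter_le U (fun x => lab x = y)
    omega
  rw [← Finset.sum_fiberwise_of_maps_to hmaps2]
  have hstep2 : ∀ a ∈ Finset.range k,
      (∑ U ∈ (E.powersetCard (k - 1)).filter
          (fun U => (U.filter (fun x => lab x = y)).card = a),
        ((k - 1).factorial * (n - k).factorial) •
          ((if k < 2 * ((U.filter (fun x => lab x = y)).card + b) then vc else vw) - vn))
      = ((m.choose a * ((n - 1 - m).choose (k - 1 - a)) * ((k - 1).factorial * (n - k).factorial) : ℕ) : ℝ) *
          ((if a + b ≤ (k - 1) / 2 then vw else vc) - vn) := by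
    intro a ha
    rw [Finset.mem_range] at ha
    have hval : ∀ U ∈ (E.powersetCard (k - 1)).filter
        (fun U => (U.filter (fun x => lab x = y)).card = a),
        ((k - 1).factorial * (n - k).factorial) •
          ((if k < 2 * ((U.filter (fun x => lab x = y)).card + b) then vc else vw) - vn)
        = ((k - 1).factorial * (n - k).factorial) •
          ((if a + b ≤ (k - 1) / 2 then vw else vc) - vn) := by
      intro U hU
      rw [Finset.mem_filter] at hU
      rw [hU.2]
      congr 2
      have hiff : (k < 2 * (a + b)) ↔ ¬ (a + b ≤ (k - 1) / 2) := by omega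
      by_cases hcase : k < 2 * (a + b)
      · rw [if_pos hcase, if_neg (hiff.mp hcase)]
      · rw [if_neg hcase, if_pos (by by_contra hc; exact hcase (hiff.mpr hc))]
    rw [Finset.sum_congr rfl hval, Finset.sum_const]
    rw [aux_count_subsets E (fun x => lab x = y) (k - 1) a (by omega), ← hmE, ← hm, hmneg]
    rw [smul_smul, nsmul_eq_mul]
  rw [Finset.sum_congr rfl hstep2]
  -- Step 3: algebra
  have hn1 : 1 ≤ n := le_trans hk1 hkn
  have hchoose : (k - 1).factorial * (n - k).factorial * (n - 1).choose (k - 1) = (n - 1).factorial := by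
    have := Nat.choose_mul_factorial_mul_factorial (show k - 1 ≤ n - 1 by omega)
    have hsub : n - 1 - (k - 1) = n - k := by omega
    rw [hsub] at this
    linarith [this]
  have hfac : n * (n - 1).factorial = n.factorial := by
    have := Nat.mul_factorial_pred (show n ≠ 0 by omega)
    omega
  have hvander : ∑ a ∈ Finset.range k, ((m.choose a : ℝ) * ((n - 1 - m).choose (k - 1 - a) : ℝ))
      = ((n - 1).choose (k - 1) : ℝ) := by
    have h1 : (m + (n - 1 - m)).choose (k - 1)
        = ∑ ij ∈ Finset.HasAntidiagonal.antidiagonal (k - 1), m.choose ij.1 * (n - 1 - m).choose ij.2 :=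
      Nat.add_choose_eq m (n - 1 - m) (k - 1)
    have h2 : m + (n - 1 - m) = n - 1 := by omega
    rw [h2] at h1
    rw [Finset.Nat.sum_antidiagonal_eq_sum_range_succ_mk] at h1
    have h3 : (k - 1).succ = k := by omega
    rw [h3] at h1
    exact_mod_cast h1.symm
  have hC0 : (((n - 1).choose (k - 1) : ℕ) : ℝ) ≠ 0 :=
    Nat.cast_ne_zero.mpr (Nat.choose_pos (show k - 1 ≤ n - 1 by omega)).ne'
  have hn0 : (n : ℝ) ≠ 0 := Nat.cast_ne_zero.mpr (by omega)
  have hfac0 : ((n.factorial : ℕ) : ℝ) ≠ 0 := Nat.cast_ne_zero.mpr n.factorial_ne_zero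
  have hkeyN : ((k - 1).factorial * (n - k).factorial) * (n * (n - 1).choose (k - 1))
      = n.factorial := by
    calc ((k - 1).factorial * (n - k).factorial) * (n * (n - 1).choose (k - 1))
        = n * ((k - 1).factorial * (n - k).factorial * (n - 1).choose (k - 1)) := by ring
      _ = n * (n - 1).factorial := by rw [hchoose]
      _ = n.factorial := hfac
  have hkey : ((((k - 1).factorial * (n - k).factorial : ℕ)) : ℝ)
      = ((n.factorial : ℕ) : ℝ) / ((n : ℝ) * (((n - 1).choose (k - 1) : ℕ) : ℝ)) := by
    rw [eq_div_iff (mul_ne_zero hn0 hC0)]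
    exact_mod_cast hkeyN
  have hLHS : ∑ a ∈ Finset.range k,
        ((m.choose a * (n - 1 - m).choose (k - 1 - a) * ((k - 1).factorial * (n - k).factorial) : ℕ) : ℝ) *
          ((if a + b ≤ (k - 1) / 2 then vw else vc) - vn)
      = ((n.factorial : ℕ) : ℝ) / ((n : ℝ) * (((n - 1).choose (k - 1) : ℕ) : ℝ)) *
        ∑ a ∈ Finset.range k, ((m.choose a : ℝ) * ((n - 1 - m).choose (k - 1 - a) : ℝ)) *
          ((if a + b ≤ (k - 1) / 2 then vw else vc) - vn) := by
    rw [Finset.mul_sum]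
    refine Finset.sum_congr rfl fun a _ => ?_
    rw [Nat.cast_mul, Nat.cast_mul, hkey]
    ring
  rw [hLHS]
  have hsplit : ∑ a ∈ Finset.range k, ((m.choose a : ℝ) * ((n - 1 - m).choose (k - 1 - a) : ℝ)) *
        ((if a + b ≤ (k - 1) / 2 then vw else vc) - vn)
      = (∑ a ∈ Finset.range k, (if a + b ≤ (k - 1) / 2 then vw else vc) *
          (m.choose a : ℝ) * ((n - 1 - m).choose (k - 1 - a) : ℝ))
        - vn * (((n - 1).choose (k - 1) : ℕ) : ℝ) := by
    rw [← hvander, Finset.mul_sum, ← Finset.sum_sub_distrib]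
    refine Finset.sum_congr rfl fun a _ => ?_
    ring
  rw [hsplit]
  field_simp
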